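/- Let Q ⊆ ℝ^K be a nonempty closed convex set, let F : ℝ^K → ℝ^K be monotone on Q, let φ : ℝ^K → ℝ be convex and differentiable, and let ε > 0 and δ ≥ 0. Suppose s ∈ Q solves VI(Q, F), and suppose p ∈ Q is a δ-inexact solution of the perturbed problem, i.e., ⟨F(p) + ε∇φ(p), y − p⟩ ≥ −δ for all y ∈ Q. Then ε·⟨∇φ(p), s − p⟩ ≥ −δ, and consequently φ(p) ≤ φ(s) + δ/ε. -/

import Mathlib

open scoped RealInnerProductSpace
open Filter

lemma grad_ineq {K : ℕ} (φ : EuclideanSpace ℝ (Fin K) → ℝ)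
    (hφ : ConvexOn ℝ Set.univ φ) (x y G : EuclideanSpace ℝ (Fin K))
    (hG : HasGradientAt φ G x) : φ x + ⟪G, y - x⟫ ≤ φ y := by
  have hF : HasFDerivAt φ (InnerProductSpace.toDual ℝ _ G) x :=
    hasGradientAt_iff_hasFDerivAt.mp hG
  set ψ : ℝ → ℝ := fun t => φ (x + t • (y - x)) with hψ
  have hline : HasDerivAt (fun t : ℝ => x + t • (y - x)) (y - x) 0 := by
    simpa using ((hasDerivAt_id (0:ℝ)).smul_const (y - x)).const_add x
  have hd : HasDerivAt ψ ⟪G, y - x⟫ 0 := by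
    have hF' : HasFDerivAt φ (InnerProductSpace.toDual ℝ _ G) (x + (0:ℝ) • (y - x)) := by
      simpa using hF
    have := hF'.comp_hasDerivAt (0 : ℝ) hline
    simpa [ψ, InnerProductSpace.toDual_apply_apply, Function.comp_def] using this
  have hslope : Tendsto (slope ψ 0) (nhdsWithin 0 {(0:ℝ)}ᶜ) (nhds ⟪G, y - x⟫) :=
    hasDerivAt_iff_tendsto_slope.mp hd
  have hslope' : Tendsto (slope ψ 0) (nhdsWithin 0 (Set.Ioi 0)) (nhds ⟪G, y - x⟫) :=
    hslope.mono_left (nhdsWithin_mono _ (fun t ht => by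
      simp only [Set.mem_compl_iff, Set.mem_singleton_iff]
      exact ne_of_gt ht))
  have hbound : ∀ᶠ t in nhdsWithin (0:ℝ) (Set.Ioi 0), slope ψ 0 t ≤ ψ 1 - ψ 0 := by
    filter_upwards [Ioo_mem_nhdsGT_of_mem (by norm_num : (0:ℝ) ∈ Set.Ico 0 1)] with t ht
    obtain ⟨ht0, ht1⟩ := ht
    have hconv := hφ.2 (Set.mem_univ x) (Set.mem_univ y)
      (show (0:ℝ) ≤ 1 - t by linarith) (le_of_lt ht0) (by ring)
    have hxt : x + t • (y - x) = (1 - t) • x + t • y := by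
      simp [smul_sub, sub_smul]; abel
    have hψt : ψ t ≤ (1 - t) * φ x + t * φ y := by
      rw [hψ]; simp only; rw [hxt]; exact hconv
    have : ψ t - ψ 0 ≤ t * (ψ 1 - ψ 0) := by
      have hψ0 : ψ 0 = φ x := by simp [ψ]
      have hψ1 : ψ 1 = φ y := by simp [ψ]
      rw [hψ0, hψ1]; nlinarith
    rw [slope_def_field, sub_zero, div_le_iff₀ ht0]
    linarith
  have hle : ⟪G, y - x⟫ ≤ ψ 1 - ψ 0 :=
    le_of_tendsto hslope' hbound
  have hψ0 : ψ 0 = φ x := by simp [ψ]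
  have hψ1 : ψ 1 = φ y := by simp [ψ]
  rw [hψ0, hψ1] at hle; linarith

/-- A `δ`-inexact solution `p` of the perturbed problem `VI(Q, F + ε∇φ)`
satisfies `ε⟨∇φ(p), s − p⟩ ≥ −δ` and `φ(p) ≤ φ(s) + δ/ε` for every solution `s`
of the monotone problem `VI(Q, F)`. -/
theorem stmt16 (K : ℕ) (Q : Set (EuclideanSpace ℝ (Fin K))) (hQne : Q.Nonempty)
    (hQcl : IsClosed Q) (hQcv : Convex ℝ Q)
    (F : EuclideanSpace ℝ (Fin K) → EuclideanSpace ℝ (Fin K))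
    (hF : ∀ x ∈ Q, ∀ y ∈ Q, 0 ≤ ⟪F x - F y, x - y⟫)
    (φ : EuclideanSpace ℝ (Fin K) → ℝ) (hφ : ConvexOn ℝ Set.univ φ)
    (g : EuclideanSpace ℝ (Fin K) → EuclideanSpace ℝ (Fin K))
    (hg : ∀ x, HasGradientAt φ (g x) x)
    (ε δ : ℝ) (hε : 0 < ε) (hδ : 0 ≤ δ)
    (s : EuclideanSpace ℝ (Fin K)) (hs : s ∈ Q)
    (hsol : ∀ x ∈ Q, 0 ≤ ⟪F s, x - s⟫)
    (p : EuclideanSpace ℝ (Fin K)) (hp : p ∈ Q)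
    (hpsol : ∀ y ∈ Q, -δ ≤ ⟪F p + ε • g p, y - p⟫) :
    -δ ≤ ε * ⟪g p, s - p⟫ ∧ φ p ≤ φ s + δ / ε := by
  have h1 : -δ ≤ ⟪F p, s - p⟫ + ε * ⟪g p, s - p⟫ := by
    have := hpsol s hs
    simpa [inner_add_left, inner_smul_left] using this
  have hmono : 0 ≤ ⟪F p - F s, p - s⟫ := hF p hp s hs
  have h2 : 0 ≤ ⟪F s, p - s⟫ := hsol p hp
  have h3 : ⟪F p, s - p⟫ ≤ 0 := by
    have e1 : ⟪F p - F s, p - s⟫ = ⟪F p, p - s⟫ - ⟪F s, p - s⟫ := by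
      rw [inner_sub_left]
    have e2 : ⟪F p, s - p⟫ = -⟪F p, p - s⟫ := by
      rw [← inner_neg_right]; congr 1; abel
    nlinarith
  have hmain : -δ ≤ ε * ⟪g p, s - p⟫ := by linarith
  refine ⟨hmain, ?_⟩
  have hgrad : φ p + ⟪g p, s - p⟫ ≤ φ s := grad_ineq φ hφ p s (g p) (hg p)
  have : -δ / ε ≤ ⟪g p, s - p⟫ := by
    rw [div_le_iff₀ hε] at *
    nlinarith
  have : -(δ / ε) ≤ ⟪g p, s - p⟫ := by rw [neg_div] at this; exact this
  linarith
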